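/- arXiv:1102.2354 — 4 statements merged into one kernel-verified Lean document; each statement's English description precedes it below -/
import Mathlib

section
/- Let a > 0 and b be real numbers. Then ∫_{-∞}^{∞} |λ| e^{-aλ² + 2bλ} dλ = a^{-1} · ₁F₁(1, 1/2, b²/a), where ₁F₁ is the confluent hypergeometric function of the first kind (using Γ(1) = 1). -/
open MeasureTheory Real Set
open scoped ENNReal NNReal


/-- The confluent hypergeometric function of the first kind,
`₁F₁(a, b, z) = ∑_{k≥0} (a)_k z^k / ((b)_k k!)`. -/
noncomputable def hyp1F1 (a b z : ℝ) : ℝ :=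
  ∑' k : ℕ, ((ascPochhammer ℝ k).eval a * z ^ k) /
    ((ascPochhammer ℝ k).eval b * (Nat.factorial k))

lemma poch_one (k : ℕ) : (ascPochhammer ℝ k).eval 1 = k.factorial := by
  induction k with
  | zero => simp
  | succ n ih =>
      rw [ascPochhammer_succ_eval, ih, Nat.factorial_succ]
      push_cast; ring

lemma poch_half (k : ℕ) :
    (ascPochhammer ℝ k).eval (1/2) * (4 ^ k * k.factorial) = (2*k).factorial := by
  induction k with
  | zero => simp
  | succ n ih =>
      rw [ascPochhammer_succ_eval]
      have h : (2*(n+1)) = (2*n+1)+1 := by ring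
      rw [h, Nat.factorial_succ, Nat.factorial_succ, Nat.factorial_succ (2*n)]
      push_cast
      linear_combination ((1/2 + (n:ℝ)) * 4 * ((n:ℝ)+1)) * ih

lemma Jodd (a : ℝ) (k : ℕ) :
    ∫ x : ℝ, |x| * x^(2*k+1) * Real.exp (-a*x^2) = 0 := by
  have h := integral_neg_eq_self (fun x : ℝ => |x| * x^(2*k+1) * Real.exp (-a*x^2)) volume
  have hodd : ∀ x : ℝ, (-x)^(2*k+1) = -x^(2*k+1) := fun x => Odd.neg_pow ⟨k, by ring⟩ x
  simp only [abs_neg, neg_sq, hodd, mul_neg, neg_mul, integral_neg] at h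
  simp only [neg_mul]
  linarith

lemma Jeven (a : ℝ) (ha : 0 < a) (k : ℕ) :
    ∫ x : ℝ, |x| * x^(2*k) * Real.exp (-a*x^2) = k.factorial / a^(k+1) := by
  have h1 : (fun x : ℝ => |x| * x^(2*k) * Real.exp (-a*x^2))
      = (fun x : ℝ => (fun t : ℝ => t^(2*k+1) * Real.exp (-a*t^2)) |x|) := by
    funext x
    simp only
    conv_rhs => rw [pow_succ, sq_abs]
    rw [Even.pow_abs ⟨k, by ring⟩]
    ring
  rw [h1, integral_comp_abs (f := fun t : ℝ => t^(2*k+1) * Real.exp (-a*t^2))]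
  have h2 : ∫ x in Ioi (0:ℝ), x^(2*k+1) * Real.exp (-a*x^2)
      = ∫ x in Ioi (0:ℝ), x ^ ((2*k+1 : ℕ) : ℝ) * Real.exp (-a * x ^ (2:ℝ)) := by
    refine setIntegral_congr_fun measurableSet_Ioi (fun x hx => ?_)
    rw [Real.rpow_natCast, show (2:ℝ) = ((2:ℕ):ℝ) by norm_num, Real.rpow_natCast]
  rw [h2, integral_rpow_mul_exp_neg_mul_rpow two_pos
    (lt_of_lt_of_le (by norm_num) (Nat.cast_nonneg _)) ha]
  have h3 : (-(((2*k+1:ℕ):ℝ) + 1) / 2) = -((k:ℝ)+1) := by push_cast; ring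
  have h4 : ((((2*k+1:ℕ):ℝ) + 1) / 2) = (k:ℝ)+1 := by push_cast; ring
  rw [h3, h4, Real.Gamma_nat_eq_factorial, Real.rpow_neg ha.le,
    show ((k:ℝ)+1) = ((k+1 : ℕ):ℝ) by push_cast; ring, Real.rpow_natCast]
  field_simp

lemma Gint (c a : ℝ) (ha : 0 < a) :
    Integrable (fun x : ℝ => |x| * Real.exp (c*|x|) * Real.exp (-a*x^2)) := by
  have hbig : Integrable (fun x : ℝ => |x * Real.exp (-(a/2) * x^2)|) :=
    (integrable_mul_exp_neg_mul_sq (half_pos ha)).abs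
  refine Integrable.mono' (hbig.const_mul (Real.exp (c^2/(2*a)))) ?_ ?_
  · exact ((continuous_abs.mul ((continuous_const.mul continuous_abs).rexp)).mul
      ((continuous_const.mul (continuous_pow 2)).rexp)).aestronglyMeasurable
  · filter_upwards with x
    have key : c*|x| + (-a*x^2) ≤ c^2/(2*a) + (-(a/2) * x^2) := by
      have hs : |x|^2 = x^2 := sq_abs x
      rw [← sub_nonneg, show c^2/(2*a) + (-(a/2)*x^2) - (c*|x| + -a*x^2)
        = (a*|x| - c)^2/(2*a) from by field_simp; linear_combination (-a^2) * hs]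
      positivity
    have h1 : |x| * Real.exp (c*|x|) * Real.exp (-a*x^2)
        = |x| * Real.exp (c*|x| + (-a*x^2)) := by
      rw [Real.exp_add, mul_assoc]
    have h2 : Real.exp (c^2/(2*a)) * |x * Real.exp (-(a/2) * x^2)|
        = |x| * Real.exp (c^2/(2*a) + (-(a/2) * x^2)) := by
      rw [abs_mul, abs_of_pos (Real.exp_pos _), Real.exp_add]; ring
    rw [Real.norm_eq_abs, abs_of_nonneg (by positivity), h1, h2]
    exact mul_le_mul_of_nonneg_left (Real.exp_le_exp.2 key) (abs_nonneg x)

lemma exp_tsum (t : ℝ) : (∑' n : ℕ, t^n / (n.factorial : ℝ)) = Real.exp t :=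
  ((congrFun Real.exp_eq_exp_ℝ t).trans (congrFun NormedSpace.exp_eq_tsum_div t)).symm

set_option maxHeartbeats 1000000 in
theorem stmt0 (a b : ℝ) (ha : 0 < a) :
    ∫ x : ℝ, |x| * Real.exp (-a * x ^ 2 + 2 * b * x)
      = a⁻¹ * hyp1F1 1 (1 / 2) (b ^ 2 / a) := by
  set g : ℕ → ℝ → ℝ :=
    fun n x => ((2*b)^n / n.factorial) * (|x| * x^n * Real.exp (-a*x^2)) with hg
  have hmeas : ∀ n, AEStronglyMeasurable (g n) volume := fun n =>
    (continuous_const.mul ((continuous_abs.mul (continuous_pow n)).mul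
      ((continuous_const.mul (continuous_pow 2)).rexp))).aestronglyMeasurable
  have hnorm : ∀ n x, ‖g n x‖
      = ((2 * |b| * |x|)^n / n.factorial) * (|x| * Real.exp (-a*x^2)) := by
    intro n x
    rw [hg]
    simp only [Real.norm_eq_abs, abs_mul, abs_div, abs_pow, abs_abs, Nat.abs_cast,
      abs_of_pos (Real.exp_pos _), abs_two]
    rw [mul_pow, mul_pow]
    ring
  have hsumnorm : ∀ x, Summable fun n => ‖g n x‖ := by
    intro x
    simp only [hnorm]
    exact (Real.summable_pow_div_factorial _).mul_right _
  have htsumnorm : ∀ x, ∑' n, ‖g n x‖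
      = |x| * Real.exp (2 * |b| * |x|) * Real.exp (-a*x^2) := by
    intro x
    simp only [hnorm]
    rw [tsum_mul_right, exp_tsum]
    ring
  have hf' : ∑' n, ∫⁻ x, ‖g n x‖₊ ∂volume ≠ ⊤ := by
    rw [← lintegral_tsum (f := fun n x => (‖g n x‖₊ : ℝ≥0∞)) (fun n => (hmeas n).enorm)]
    have hG : Integrable (fun x : ℝ => |x| * Real.exp (2 * |b| * |x|) * Real.exp (-a*x^2)) :=
      Gint _ _ ha
    have hpt' : ∀ x : ℝ, (∑' n, (‖g n x‖₊ : ℝ≥0∞))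
        = ENNReal.ofReal (|x| * Real.exp (2 * |b| * |x|) * Real.exp (-a*x^2)) := by
      intro x
      rw [← htsumnorm x, ENNReal.ofReal_tsum_of_nonneg (fun n => norm_nonneg _) (hsumnorm x)]
      exact tsum_congr fun n => (ofReal_norm _).symm
    refine ne_top_of_le_ne_top hG.2.ne ?_
    rw [lintegral_congr hpt']
    exact lintegral_mono fun x => Real.ofReal_le_enorm _
  have hpt : (fun x : ℝ => |x| * Real.exp (-a * x ^ 2 + 2 * b * x))
      = fun x => ∑' n, g n x := by
    funext x
    have h5 : ∀ n, g n x = (2*b*x)^n / n.factorial * (|x| * Real.exp (-a*x^2)) := by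
      intro n
      rw [hg]
      simp only [mul_pow]
      ring
    rw [tsum_congr h5, tsum_mul_right, exp_tsum, Real.exp_add]
    ring
  rw [show (∫ x : ℝ, |x| * Real.exp (-a * x ^ 2 + 2 * b * x))
      = ∫ x : ℝ, ∑' n, g n x from congrArg _ hpt]
  rw [integral_tsum hmeas hf']
  have hint : ∀ n, ∫ x, g n x
      = ((2*b)^n / n.factorial) * ∫ x : ℝ, |x| * x^n * Real.exp (-a*x^2) :=
    fun n => integral_const_mul _ _
  have hFodd : ∀ k, ∫ x, g (2*k+1) x = 0 := by
    intro k; rw [hint, Jodd]; ring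
  have hFeven : ∀ k, ∫ x, g (2*k) x
      = a⁻¹ * (4*b^2/a)^k * ((k.factorial : ℝ)/((2*k).factorial)) := by
    intro k
    rw [hint, Jeven a ha k]
    have h1 : ((2*k).factorial : ℝ) ≠ 0 := by positivity
    rw [pow_mul, show (2*b)^2 = 4*b^2 by ring, div_pow]
    field_simp
    ring_nf
  have hkey : ∀ k : ℕ, ((k.factorial : ℝ))/((2*k).factorial) ≤ 1/(k.factorial : ℝ) := by
    intro k
    rw [div_le_div_iff₀ (by positivity) (by positivity), one_mul]
    have hle : (k.factorial * k.factorial : ℕ) ≤ (2*k).factorial := by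
      rw [two_mul]
      exact Nat.le_of_dvd (Nat.factorial_pos _) (Nat.factorial_mul_factorial_dvd_factorial_add k k)
    exact_mod_cast hle
  have hmaj : Summable (fun k : ℕ => a⁻¹ * (4*b^2/a)^k * (1/(k.factorial:ℝ))) := by
    refine ((Real.summable_pow_div_factorial (4*b^2/a)).mul_left a⁻¹).congr fun k => ?_
    rw [mul_assoc, mul_one_div]
  have he : Summable (fun k => ∫ x, g (2*k) x) := by
    refine Summable.of_nonneg_of_le (fun k => ?_) (fun k => ?_) hmaj
    · rw [hFeven]; positivity
    · rw [hFeven]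
      exact mul_le_mul_of_nonneg_left (hkey k) (by positivity)
  have ho : Summable (fun k => ∫ x, g (2*k+1) x) := by
    simp only [hFodd]; exact summable_zero
  rw [← tsum_even_add_odd he ho,
    show (∑' k : ℕ, ∫ x, g (2*k+1) x) = 0 from by simp only [hFodd]; exact tsum_zero, add_zero]
  have hterm : ∀ k : ℕ, a⁻¹ * (((ascPochhammer ℝ k).eval 1 * (b^2/a)^k) /
      ((ascPochhammer ℝ k).eval (1/2) * (k.factorial : ℝ))) = ∫ x, g (2*k) x := by
    intro k
    rw [hFeven, poch_one]
    have h4 : ((4:ℝ)^k * (k.factorial:ℝ)) ≠ 0 := by positivity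
    have h1 : (k.factorial : ℝ) ≠ 0 := by positivity
    have h2 : ((2*k).factorial : ℝ) ≠ 0 := by positivity
    have hPh : (ascPochhammer ℝ k).eval (1/2) = ((2*k).factorial : ℝ) / (4^k * k.factorial) :=
      (eq_div_iff h4).mpr (poch_half k)
    rw [hPh, div_pow]
    field_simp
    ring
    have haa : a ^ k * a⁻¹ ^ k = 1 := by rw [← mul_pow, mul_inv_cancel₀ ha.ne', one_pow]
    linear_combination (-(b^(k*2)*4^k)) * haa
  unfold hyp1F1
  rw [← tsum_mul_left]
  exact tsum_congr fun k => (hterm k).symm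
end

section
/- Let a > 0 and b be real numbers, and let n be an even natural number. Then ∫_{-∞}^{∞} |λ| λⁿ e^{-aλ² + 2bλ} dλ = a^{-(n+2)/2} · Γ((n+2)/2) · ₁F₁((n+2)/2, 1/2, b²/a). -/
open MeasureTheory Real Set
open scoped ENNReal NNReal

lemma auxPochGamma (t : ℝ) (ht : 0 < t) (m : ℕ) :
    Real.Gamma (t + m) = Real.Gamma t * (ascPochhammer ℝ m).eval t := by
  induction m with
  | zero => simp
  | succ m ih =>
    have h : t + (m : ℝ) ≠ 0 := by positivity
    rw [Nat.cast_succ, ← add_assoc, Real.Gamma_add_one h, ih, ascPochhammer_succ_eval]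
    ring

lemma auxFactorial (m : ℕ) :
    ((2 * m).factorial : ℝ) = 4 ^ m * m.factorial * (ascPochhammer ℝ m).eval (1 / 2) := by
  induction m with
  | zero => simp
  | succ m ih =>
    have h : 2 * (m + 1) = (2 * m) + 1 + 1 := by ring
    rw [h, Nat.factorial_succ, Nat.factorial_succ, Nat.factorial_succ, ascPochhammer_succ_eval]
    push_cast [ih]
    ring

lemma auxMoment {a : ℝ} (ha : 0 < a) (k : ℕ) :
    ∫ x in Ioi (0 : ℝ), x ^ k * Real.exp (-a * x ^ 2)
      = a ^ (-(((k : ℝ) + 1) / 2)) * (1 / 2) * Real.Gamma (((k : ℝ) + 1) / 2) := by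
  have hq : (-1 : ℝ) < (k : ℝ) := by
    have := Nat.cast_nonneg (α := ℝ) k; linarith
  have h := integral_rpow_mul_exp_neg_mul_rpow (p := 2) (q := (k : ℝ)) two_pos hq ha
  rw [neg_div] at h
  rw [← h]
  refine setIntegral_congr_fun measurableSet_Ioi (fun x hx => ?_)
  rw [show ((2 : ℝ) = ((2 : ℕ) : ℝ)) by norm_num, Real.rpow_natCast, Real.rpow_natCast]

lemma auxIntAbs {c : ℝ} (hc : 0 < c) (k : ℕ) :
    Integrable (fun x : ℝ => |x| ^ k * Real.exp (-c * x ^ 2)) := by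
  have hq : (-1 : ℝ) < (k : ℝ) := by
    have := Nat.cast_nonneg (α := ℝ) k; linarith
  have hIoi : IntegrableOn (fun x : ℝ => |x| ^ k * Real.exp (-c * x ^ 2)) (Ioi 0) := by
    refine (integrableOn_rpow_mul_exp_neg_mul_sq hc hq).congr_fun (fun x hx => ?_)
      measurableSet_Ioi
    dsimp only; rw [Real.rpow_natCast, abs_of_pos hx]
  rw [← integrableOn_univ, ← @Iio_union_Ici _ _ (0 : ℝ), integrableOn_union,
    integrableOn_Ici_iff_integrableOn_Ioi]
  refine ⟨?_, hIoi⟩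
  rw [← (Measure.measurePreserving_neg (volume : Measure ℝ)).integrableOn_comp_preimage
      (Homeomorph.neg ℝ).measurableEmbedding]
  simp only [Function.comp_def, neg_sq, abs_neg, neg_preimage, neg_Iio, neg_neg, neg_zero]
  exact hIoi

lemma auxIntMain {a : ℝ} (b : ℝ) (ha : 0 < a) (k : ℕ) :
    Integrable (fun x : ℝ => |x| ^ k * Real.exp (-a * x ^ 2 + 2 * b * x)) := by
  have h2 : 0 < a / 2 := by linarith
  refine Integrable.mono' ((auxIntAbs h2 k).const_mul (Real.exp (2 * b ^ 2 / a)))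
    ?_ (Filter.Eventually.of_forall fun x => ?_)
  · exact (Continuous.mul (by continuity) (by continuity)).aestronglyMeasurable
  · rw [Real.norm_eq_abs, abs_mul, abs_pow, abs_abs, abs_of_pos (Real.exp_pos _)]
    have hle : -a * x ^ 2 + 2 * b * x ≤ 2 * b ^ 2 / a + -(a / 2) * x ^ 2 := by
      have haux : a * (2 * b ^ 2 / a) = 2 * b ^ 2 := by field_simp
      nlinarith [sq_nonneg (a * x - 2 * b), ha, haux, sq_nonneg x]
    calc |x| ^ k * Real.exp (-a * x ^ 2 + 2 * b * x)
        ≤ |x| ^ k * Real.exp (2 * b ^ 2 / a + -(a / 2) * x ^ 2) := by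
          exact mul_le_mul_of_nonneg_left (Real.exp_le_exp.mpr hle) (by positivity)
      _ = Real.exp (2 * b ^ 2 / a) * (|x| ^ k * Real.exp (-(a / 2) * x ^ 2)) := by
          rw [Real.exp_add]; ring

lemma auxSeries (a b : ℝ) (n : ℕ) {x : ℝ} (hx : 0 < x) :
    x ^ (n + 1) * Real.exp (-a * x ^ 2) * (Real.exp (2 * b * x) + Real.exp (-(2 * b * x)))
      = ∑' m : ℕ, 2 * (2 * b) ^ (2 * m) / ((2 * m).factorial : ℝ)
          * (x ^ (n + 1 + 2 * m) * Real.exp (-a * x ^ 2)) := by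
  have h1 : Real.exp (2 * b * x) + Real.exp (-(2 * b * x)) = 2 * Real.cosh (2 * b * x) := by
    rw [Real.cosh_eq]; ring
  calc x ^ (n + 1) * Real.exp (-a * x ^ 2) * (Real.exp (2 * b * x) + Real.exp (-(2 * b * x)))
      = (x ^ (n + 1) * Real.exp (-a * x ^ 2) * 2) *
          ∑' m : ℕ, (2 * b * x) ^ (2 * m) / ((2 * m).factorial : ℝ) := by
        rw [h1, Real.cosh_eq_tsum]; ring
    _ = ∑' m : ℕ, (x ^ (n + 1) * Real.exp (-a * x ^ 2) * 2) *
          ((2 * b * x) ^ (2 * m) / ((2 * m).factorial : ℝ)) := by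
        rw [tsum_mul_left]
    _ = _ := tsum_congr fun m => by rw [mul_pow, pow_add]; ring

lemma auxSummable (a b : ℝ) (n : ℕ) {x : ℝ} :
    Summable (fun m : ℕ => 2 * (2 * b) ^ (2 * m) / ((2 * m).factorial : ℝ)
      * (x ^ (n + 1 + 2 * m) * Real.exp (-a * x ^ 2))) := by
  refine ((Real.hasSum_cosh (2 * b * x)).summable.mul_left
    (x ^ (n + 1) * Real.exp (-a * x ^ 2) * 2)).congr fun m => ?_
  rw [mul_pow, pow_add]; ring

lemma auxMT {a : ℝ} (b : ℝ) (ha : 0 < a) (n : ℕ) :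
    ∫ x in Ioi (0 : ℝ),
        x ^ (n + 1) * Real.exp (-a * x ^ 2) * (Real.exp (2 * b * x) + Real.exp (-(2 * b * x)))
      = ∑' m : ℕ, 2 * (2 * b) ^ (2 * m) / ((2 * m).factorial : ℝ)
          * ∫ x in Ioi (0 : ℝ), x ^ (n + 1 + 2 * m) * Real.exp (-a * x ^ 2) := by
  set F₀ : ℝ → ℝ := fun x =>
    x ^ (n + 1) * Real.exp (-a * x ^ 2) * (Real.exp (2 * b * x) + Real.exp (-(2 * b * x)))
    with hF₀
  set g : ℕ → ℝ → ℝ := fun m x => 2 * (2 * b) ^ (2 * m) / ((2 * m).factorial : ℝ)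
      * (x ^ (n + 1 + 2 * m) * Real.exp (-a * x ^ 2)) with hg
  have hgnn : ∀ m : ℕ, ∀ x : ℝ, 0 ≤ x → 0 ≤ g m x := by
    intro m x hx
    have h1 : (0 : ℝ) ≤ (2 * b) ^ (2 * m) := by rw [pow_mul]; positivity
    exact mul_nonneg (div_nonneg (mul_nonneg (by norm_num) h1) (Nat.cast_nonneg _))
      (mul_nonneg (pow_nonneg hx _) (Real.exp_pos _).le)
  have hgc : ∀ m : ℕ, Continuous (g m) := fun m =>
    continuous_const.mul ((continuous_pow _).mul
      (Real.continuous_exp.comp (continuous_const.mul (continuous_pow 2))))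
  have hFint : IntegrableOn F₀ (Ioi 0) := by
    have i1 : IntegrableOn (fun x : ℝ => |x| ^ (n + 1) * Real.exp (-a * x ^ 2 + 2 * b * x))
        (Ioi 0) := (auxIntMain b ha (n + 1)).integrableOn
    have i2 : IntegrableOn (fun x : ℝ => |x| ^ (n + 1) * Real.exp (-a * x ^ 2 + 2 * -b * x))
        (Ioi 0) := (auxIntMain (-b) ha (n + 1)).integrableOn
    refine IntegrableOn.congr_fun (i1.add i2) (fun x hx => ?_) measurableSet_Ioi
    have h2 : -a * x ^ 2 + 2 * -b * x = -a * x ^ 2 + -(2 * b * x) := by ring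
    simp only [Pi.add_apply, hF₀]
    rw [abs_of_pos hx, h2, Real.exp_add, Real.exp_add]
    ring
  have hmeas : ∀ m : ℕ, AEStronglyMeasurable (g m) (volume.restrict (Ioi 0)) := fun m =>
    (hgc m).aestronglyMeasurable
  have hbound : (∑' m : ℕ, ∫⁻ x, (‖g m x‖₊ : ℝ≥0∞) ∂(volume.restrict (Ioi 0))) ≠ ⊤ := by
    refine ne_of_lt ?_
    have e1 : ∀ m : ℕ, ∫⁻ x, (‖g m x‖₊ : ℝ≥0∞) ∂(volume.restrict (Ioi 0))
        = ∫⁻ x, ENNReal.ofReal (g m x) ∂(volume.restrict (Ioi 0)) := by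
      intro m
      refine lintegral_congr_ae ?_
      filter_upwards [ae_restrict_mem measurableSet_Ioi] with x hx
      rw [← enorm_eq_nnnorm, Real.enorm_eq_ofReal (hgnn m x hx.le)]
    calc (∑' m : ℕ, ∫⁻ x, (‖g m x‖₊ : ℝ≥0∞) ∂(volume.restrict (Ioi 0)))
        = ∑' m : ℕ, ∫⁻ x, ENNReal.ofReal (g m x) ∂(volume.restrict (Ioi 0)) := tsum_congr e1
      _ = ∫⁻ x, ∑' m : ℕ, ENNReal.ofReal (g m x) ∂(volume.restrict (Ioi 0)) :=
          (lintegral_tsum fun m => ((hgc m).measurable.ennreal_ofReal).aemeasurable).symm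
      _ ≤ ∫⁻ x, (‖F₀ x‖₊ : ℝ≥0∞) ∂(volume.restrict (Ioi 0)) := by
          refine lintegral_mono_ae ?_
          filter_upwards [ae_restrict_mem measurableSet_Ioi] with x hx
          rw [← ENNReal.ofReal_tsum_of_nonneg (fun m => hgnn m x hx.le) (auxSummable a b n),
            hg]
          rw [show (∑' m : ℕ, 2 * (2 * b) ^ (2 * m) / ((2 * m).factorial : ℝ)
              * (x ^ (n + 1 + 2 * m) * Real.exp (-a * x ^ 2))) = F₀ x from
              (auxSeries a b n hx).symm, ← enorm_eq_nnnorm, Real.enorm_eq_ofReal_abs]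
          exact ENNReal.ofReal_le_ofReal (le_abs_self _)
      _ < ⊤ := hFint.2
  calc ∫ x in Ioi (0 : ℝ), F₀ x
      = ∫ x in Ioi (0 : ℝ), ∑' m : ℕ, g m x :=
        setIntegral_congr_fun measurableSet_Ioi fun x hx => auxSeries a b n hx
    _ = ∑' m : ℕ, ∫ x in Ioi (0 : ℝ), g m x := integral_tsum hmeas hbound
    _ = _ := tsum_congr fun m => integral_const_mul _ _

theorem stmt1 (a b : ℝ) (ha : 0 < a) (n : ℕ) (hn : Even n) :
    ∫ x : ℝ, |x| * x ^ n * Real.exp (-a * x ^ 2 + 2 * b * x)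
      = Real.rpow a (-(((n : ℝ) + 2) / 2)) * Real.Gamma (((n : ℝ) + 2) / 2) *
        hyp1F1 (((n : ℝ) + 2) / 2) (1 / 2) (b ^ 2 / a) := by
  have ht : (0 : ℝ) < ((n : ℝ) + 2) / 2 := by positivity
  have hf_int : Integrable (fun x : ℝ => |x| * x ^ n * Real.exp (-a * x ^ 2 + 2 * b * x)) :=
    (auxIntMain b ha (n + 1)).congr (Filter.Eventually.of_forall fun x => by
      simp only [pow_succ, hn.pow_abs]; ring)
  have h1 := integral_add_compl (measurableSet_Ioi (a := (0 : ℝ))) hf_int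
  rw [compl_Ioi] at h1
  have h2 := integral_comp_neg_Ioi (0 : ℝ)
    (fun x => |x| * x ^ n * Real.exp (-a * x ^ 2 + 2 * b * x))
  rw [neg_zero] at h2
  have hInt_neg : IntegrableOn
      (fun x : ℝ => |(-x)| * (-x) ^ n * Real.exp (-a * (-x) ^ 2 + 2 * b * (-x))) (Ioi 0) := by
    refine IntegrableOn.congr_fun (auxIntMain (-b) ha (n + 1)).integrableOn
      (fun x hx => ?_) measurableSet_Ioi
    rw [abs_neg, hn.neg_pow, pow_succ, hn.pow_abs]
    have : -a * (-x) ^ 2 + 2 * b * -x = -a * x ^ 2 + 2 * (-b) * x := by ring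
    rw [this]; ring
  have h3 : ∫ x : ℝ, |x| * x ^ n * Real.exp (-a * x ^ 2 + 2 * b * x)
      = ∫ x in Ioi (0 : ℝ), x ^ (n + 1) * Real.exp (-a * x ^ 2) *
          (Real.exp (2 * b * x) + Real.exp (-(2 * b * x))) := by
    rw [← h1, ← h2, ← integral_add hf_int.integrableOn hInt_neg]
    refine setIntegral_congr_fun measurableSet_Ioi (fun x hx => ?_)
    have hx' : (0 : ℝ) < x := hx
    have e2 : -a * (-x) ^ 2 + 2 * b * -x = -a * x ^ 2 + -(2 * b * x) := by ring
    rw [abs_neg, hn.neg_pow, abs_of_pos hx', e2, Real.exp_add, Real.exp_add]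
    ring
  rw [h3, auxMT b ha n]
  have key : ∀ m : ℕ, 2 * (2 * b) ^ (2 * m) / ((2 * m).factorial : ℝ)
        * ∫ x in Ioi (0 : ℝ), x ^ (n + 1 + 2 * m) * Real.exp (-a * x ^ 2)
      = (a ^ (-(((n : ℝ) + 2) / 2)) * Real.Gamma (((n : ℝ) + 2) / 2)) *
        (((ascPochhammer ℝ m).eval (((n : ℝ) + 2) / 2) * (b ^ 2 / a) ^ m) /
          ((ascPochhammer ℝ m).eval (1 / 2) * (m.factorial : ℝ))) := by
    intro m
    have hc2 : (((n + 1 + 2 * m : ℕ) : ℝ) + 1) / 2 = ((n : ℝ) + 2) / 2 + (m : ℕ) := by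
      push_cast; ring
    rw [auxMoment ha (n + 1 + 2 * m), hc2, auxPochGamma _ ht m, neg_add,
      Real.rpow_add ha, Real.rpow_neg ha.le (m : ℝ), Real.rpow_natCast,
      auxFactorial m, div_pow]
    have hb2 : (2 * b) ^ (2 * m) = 4 ^ m * (b ^ 2) ^ m := by
      rw [pow_mul, show (2 * b) ^ 2 = 4 * b ^ 2 by ring, mul_pow]
    rw [hb2]
    have hQ : (0 : ℝ) < (ascPochhammer ℝ m).eval (1 / 2) :=
      ascPochhammer_pos m (1 / 2) (by norm_num)
    have hfac : (0 : ℝ) < (m.factorial : ℝ) := by exact_mod_cast m.factorial_pos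
    have ham : (0 : ℝ) < a ^ m := pow_pos ha m
    field_simp
  rw [tsum_congr key, tsum_mul_left]
  simp only [hyp1F1, Real.rpow_eq_pow]
end

section
/- With |ρ| < 1 and h(x,t) the density of the ratio of jointly Gaussian variables with means ν_v, ν_w and covariance t[[1,ρ],[ρ,1]], for every fixed x we have lim_{t→∞} h(x,t) = √(1−ρ²) / (π(x² − 2ρx + 1)). -/
/-- The density of the ratio `W/V` of jointly Gaussian variables with means `νv, νw`
and covariance `t·[[1, ρ],[ρ, 1]]`, as given by the explicit formula of Theorem 1. -/
noncomputable def ratioDensity (ρ νv νw x t : ℝ) : ℝ :=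
  Real.exp (-((νv ^ 2 - 2 * ρ * νv * νw + νw ^ 2) / (2 * (1 - ρ ^ 2) * t))) /
      (2 * Real.pi * Real.sqrt ((1 - ρ ^ 2) * t ^ 2) *
        ((1 - 2 * ρ * x + x ^ 2) / (2 * (1 - ρ ^ 2) * t))) *
    hyp1F1 1 (1 / 2)
      (((νv - ρ * νw + (νw - ρ * νv) * x) / (2 * (1 - ρ ^ 2) * t)) ^ 2 /
        ((1 - 2 * ρ * x + x ^ 2) / (2 * (1 - ρ ^ 2) * t)))

open Filter Real

lemma asc_half_ge (k : ℕ) : (k.factorial : ℝ) / 2 ^ k ≤ (ascPochhammer ℝ k).eval (1/2 : ℝ) := by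
  induction k with
  | zero => simp
  | succ n ih =>
    rw [ascPochhammer_succ_right, Polynomial.eval_mul, Polynomial.eval_add, Polynomial.eval_X,
      Polynomial.eval_natCast, Nat.factorial_succ]
    have h2 : (((n+1) * n.factorial : ℕ) : ℝ) / 2 ^ (n+1)
        = ((n.factorial : ℝ)/2^n) * ((n+1:ℝ)/2) := by push_cast; ring
    rw [h2]
    have hle : ((n+1:ℝ)/2) ≤ (1/2 + n : ℝ) := by linarith
    have hpos : (0:ℝ) < (n.factorial : ℝ)/2^n := by positivity
    nlinarith [ih]

lemma asc_half_pos (k : ℕ) : (0:ℝ) < (ascPochhammer ℝ k).eval (1/2 : ℝ) :=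
  lt_of_lt_of_le (by positivity) (asc_half_ge k)

lemma hyp_term_norm_le (z : ℝ) (k : ℕ) :
    ‖((ascPochhammer ℝ k).eval (1:ℝ) * z ^ k) /
      ((ascPochhammer ℝ k).eval (1/2:ℝ) * (Nat.factorial k))‖
      ≤ (2*|z|) ^ k / k.factorial := by
  have hp := asc_half_ge k
  have hp' := asc_half_pos k
  have hfac : (0:ℝ) < (k.factorial : ℝ) := by positivity
  rw [ascPochhammer_eval_one, Real.norm_eq_abs, abs_div, abs_mul, abs_mul, abs_pow,
    Nat.abs_cast, abs_of_pos hp']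
  have h1 : (k.factorial : ℝ) * |z| ^ k / ((ascPochhammer ℝ k).eval (1/2:ℝ) * k.factorial)
      = |z| ^ k / (ascPochhammer ℝ k).eval (1/2:ℝ) := by
    field_simp
  rw [h1]
  calc |z| ^ k / (ascPochhammer ℝ k).eval (1/2:ℝ)
      ≤ |z| ^ k / ((k.factorial : ℝ) / 2^k) := by
        apply div_le_div_of_nonneg_left (by positivity) (by positivity) hp
    _ = (2*|z|) ^ k / k.factorial := by
        rw [mul_pow]; field_simp

lemma hyp_summable (z : ℝ) : Summable (fun k : ℕ =>
    ((ascPochhammer ℝ k).eval (1:ℝ) * z ^ k) /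
      ((ascPochhammer ℝ k).eval (1/2:ℝ) * (Nat.factorial k))) :=
  Summable.of_norm_bounded (Real.summable_pow_div_factorial (2*|z|)) (hyp_term_norm_le z)

lemma hyp_sub_one_bound (z : ℝ) (hz : |z| ≤ 1) :
    |hyp1F1 1 (1/2) z - 1| ≤ (∑' k : ℕ, (2:ℝ)^(k+1) / k.factorial) * |z| := by
  have hf := hyp_summable z
  have hg : Summable (fun k : ℕ => (2:ℝ)^(k+1) / k.factorial) := by
    have := (Real.summable_pow_div_factorial 2).mul_left 2
    refine this.congr fun k => ?_
    rw [pow_succ]; ring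
  have hg' : Summable (fun k : ℕ => ((2:ℝ)^(k+1) / k.factorial) * |z|) := hg.mul_right _
  rw [hyp1F1, Summable.tsum_eq_zero_add hf]
  simp only [ascPochhammer_zero, Polynomial.eval_one, pow_zero, Nat.factorial_zero]
  norm_num
  rw [← tsum_mul_right, ← Real.norm_eq_abs]
  refine tsum_of_norm_bounded hg'.hasSum fun k => ?_
  have hb := hyp_term_norm_le z (k+1)
  rw [ascPochhammer_eval_one] at hb
  refine le_trans hb ?_
  rw [mul_pow, div_mul_eq_mul_div]
  have hzz : |z| ^ (k+1) ≤ |z| := by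
    calc |z| ^ (k+1) ≤ |z| ^ 1 := pow_le_pow_of_le_one (abs_nonneg z) hz (by omega)
      _ = |z| := pow_one _
  have hfle : ((k.factorial : ℕ) : ℝ) ≤ (((k+1).factorial : ℕ) : ℝ) := by
    exact_mod_cast Nat.factorial_le (Nat.le_succ k)
  gcongr

lemma hyp_tendsto : Filter.Tendsto (fun z => hyp1F1 1 (1/2) z) (nhds 0) (nhds 1) := by
  have C := ∑' k : ℕ, (2:ℝ)^(k+1) / Nat.factorial k
  have h0 : Filter.Tendsto (fun z => hyp1F1 1 (1/2) z - 1) (nhds 0) (nhds 0) := by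
    apply squeeze_zero_norm'
      (a := fun z : ℝ => (∑' k : ℕ, (2:ℝ)^(k+1) / Nat.factorial k) * |z|)
    · have hev : ∀ᶠ z : ℝ in nhds 0, |z| ≤ 1 := by
        filter_upwards [Metric.closedBall_mem_nhds (0:ℝ) one_pos] with z hz
        simpa [Real.dist_eq] using hz
      filter_upwards [hev] with z hz
      simpa [Real.norm_eq_abs] using hyp_sub_one_bound z hz
    · have habs : Filter.Tendsto (fun z : ℝ => |z|) (nhds 0) (nhds 0) := by
        simpa using continuous_abs.tendsto (0:ℝ)
      simpa using (tendsto_const_nhds (x := ∑' k : ℕ, (2:ℝ)^(k+1) / Nat.factorial k)).mul habs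
  have := h0.add (tendsto_const_nhds (x := (1:ℝ)))
  simpa using this

theorem stmt10 (ρ νv νw : ℝ) (hρ : |ρ| < 1) (x : ℝ) :
    Filter.Tendsto (fun t => ratioDensity ρ νv νw x t) Filter.atTop
      (nhds (Real.sqrt (1 - ρ ^ 2) / (Real.pi * (x ^ 2 - 2 * ρ * x + 1)))) := by
  have hrr := abs_lt.1 hρ
  have hs : 0 < 1 - ρ^2 := by nlinarith
  have hQ : (0:ℝ) < x^2 - 2*ρ*x + 1 := by nlinarith [sq_nonneg (x - ρ)]
  have hπ := Real.pi_pos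
  have hsq : 0 < Real.sqrt (1 - ρ^2) := Real.sqrt_pos.2 hs
  have hss : Real.sqrt (1 - ρ^2) * Real.sqrt (1 - ρ^2) = 1 - ρ^2 := Real.mul_self_sqrt hs.le
  set A := νv^2 - 2*ρ*νv*νw + νw^2 with hA
  set B := νv - ρ*νw + (νw - ρ*νv)*x with hB
  set L := Real.sqrt (1 - ρ^2) / (Real.pi * (x^2 - 2*ρ*x + 1)) with hL
  have heq : ∀ᶠ t in atTop, ratioDensity ρ νv νw x t
      = Real.exp (-(A/(2*(1-ρ^2)*t))) * L
        * hyp1F1 1 (1/2) (B^2/(2*(1-ρ^2)*(x^2-2*ρ*x+1)*t)) := by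
    filter_upwards [eventually_gt_atTop (0:ℝ)] with t ht
    unfold ratioDensity
    have hsqrt : Real.sqrt ((1-ρ^2) * t^2) = Real.sqrt (1-ρ^2) * t := by
      rw [Real.sqrt_mul hs.le, Real.sqrt_sq ht.le]
    rw [hsqrt]
    have harg : ((νv - ρ*νw + (νw - ρ*νv)*x)/(2*(1-ρ^2)*t))^2
        / ((1 - 2*ρ*x + x^2)/(2*(1-ρ^2)*t))
        = B^2/(2*(1-ρ^2)*(x^2-2*ρ*x+1)*t) := by
      rw [hB]
      have h1 : (1 - 2*ρ*x + x^2) = x^2-2*ρ*x+1 := by ring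
      rw [h1]
      field_simp
    rw [harg, hL]
    congr 1
    have hD : 2*Real.pi*(Real.sqrt (1-ρ^2)*t)*((1 - 2*ρ*x + x^2)/(2*(1-ρ^2)*t))
        = Real.pi*(x^2-2*ρ*x+1)/Real.sqrt (1-ρ^2) := by
      rw [eq_div_iff hsq.ne']
      field_simp
      linear_combination (1 - 2*ρ*x + x^2) * hss
    rw [hD, div_div_eq_mul_div, mul_div_assoc]
  have ht2s : Filter.Tendsto (fun t : ℝ => 2*(1-ρ^2)*t) atTop atTop :=
    Filter.Tendsto.const_mul_atTop (by positivity) tendsto_id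
  have ht2sq : Filter.Tendsto (fun t : ℝ => 2*(1-ρ^2)*(x^2-2*ρ*x+1)*t) atTop atTop :=
    Filter.Tendsto.const_mul_atTop (by positivity) tendsto_id
  have te : Filter.Tendsto (fun t : ℝ => Real.exp (-(A/(2*(1-ρ^2)*t)))) atTop (nhds 1) := by
    have h1 : Filter.Tendsto (fun t : ℝ => -(A/(2*(1-ρ^2)*t))) atTop (nhds 0) := by
      simpa using (Filter.Tendsto.div_atTop (tendsto_const_nhds (x := A)) ht2s).neg
    simpa [Function.comp_def] using (Real.continuous_exp.tendsto 0).comp h1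
  have th : Filter.Tendsto (fun t : ℝ => hyp1F1 1 (1/2) (B^2/(2*(1-ρ^2)*(x^2-2*ρ*x+1)*t)))
      atTop (nhds 1) := by
    have h2 : Filter.Tendsto (fun t : ℝ => B^2/(2*(1-ρ^2)*(x^2-2*ρ*x+1)*t)) atTop (nhds 0) :=
      Filter.Tendsto.div_atTop (tendsto_const_nhds (x := B^2)) ht2sq
    exact hyp_tendsto.comp h2
  have hfinal := (te.mul (tendsto_const_nhds (x := L))).mul th
  rw [one_mul, mul_one] at hfinal
  exact hfinal.congr' (Filter.EventuallyEq.symm heq)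
end

section
/- Let a > 0, b ∈ ℝ and define Lₙ = ∫_{-∞}^{∞} |λ| λⁿ e^{-aλ² + 2bλ} dλ. Then L₄ = (3b/(2a²))·L₁ + ((2a + b²)/a²)·L₂. -/
open Real MeasureTheory Filter Set

lemma hasDerivAt_abs_mul_self (x : ℝ) : HasDerivAt (fun y : ℝ => |y| * y) (2 * |x|) x := by
  rcases lt_trichotomy x 0 with hx | rfl | hx
  · have hev : (fun y : ℝ => -(y * y)) =ᶠ[nhds x] fun y => |y| * y := by
      filter_upwards [eventually_lt_nhds hx] with y hy
      rw [abs_of_neg hy]; ring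
    have : HasDerivAt (fun y : ℝ => -(y * y)) (2 * |x|) x := by
      have := ((hasDerivAt_id x).mul (hasDerivAt_id x)).neg
      refine this.congr_deriv ?_
      simp only [id]
      rw [abs_of_neg hx]; ring
    exact this.congr_of_eventuallyEq hev.symm
  · rw [hasDerivAt_iff_tendsto_slope]
    have : (fun y : ℝ => |y|) =ᶠ[nhdsWithin 0 {(0:ℝ)}ᶜ] slope (fun y : ℝ => |y| * y) 0 := by
      filter_upwards [self_mem_nhdsWithin] with y hy
      have hy0 : y ≠ 0 := hy
      simp [slope_def_field, abs_of_nonneg, div_eq_iff hy0]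
      field_simp
    refine Tendsto.congr' this ?_
    simpa using (continuous_abs.tendsto (0:ℝ)).mono_left nhdsWithin_le_nhds
  · have hev : (fun y : ℝ => y * y) =ᶠ[nhds x] fun y => |y| * y := by
      filter_upwards [eventually_gt_nhds hx] with y hy
      rw [abs_of_pos hy]
    have : HasDerivAt (fun y : ℝ => y * y) (2 * |x|) x := by
      have := (hasDerivAt_id x).mul (hasDerivAt_id x)
      refine this.congr_deriv ?_
      simp only [id]
      rw [abs_of_pos hx]; ring
    exact this.congr_of_eventuallyEq hev.symm

lemma hasDerivAt_abs_mul_pow (n : ℕ) (x : ℝ) :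
    HasDerivAt (fun y : ℝ => |y| * y ^ (n + 1)) ((n + 2) * (|x| * x ^ n)) x := by
  have h : HasDerivAt (fun y : ℝ => (|y| * y) * y ^ n)
      ((2 * |x|) * x ^ n + (|x| * x) * (n * x ^ (n - 1))) x :=
    (hasDerivAt_abs_mul_self x).mul (hasDerivAt_pow n x)
  have e1 : (fun y : ℝ => (|y| * y) * y ^ n) = fun y : ℝ => |y| * y ^ (n + 1) := by
    funext y; ring
  rw [e1] at h
  convert h using 1
  rcases Nat.eq_zero_or_pos n with rfl | hn
  · norm_num
  · have hx : x * x ^ (n - 1) = x ^ n := by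
      rw [← pow_succ']
      congr 1; omega
    rw [show |x| * x * ((n:ℝ) * x ^ (n - 1)) = (n:ℝ) * (|x| * (x * x ^ (n - 1))) by ring, hx]
    ring

lemma integrable_aux (a b : ℝ) (ha : 0 < a) (n : ℕ) :
    Integrable (fun l : ℝ => |l| * l ^ n * Real.exp (-a * l ^ 2 + 2 * b * l)) := by
  have h1 : Integrable (fun x : ℝ => x ^ ((n : ℝ) + 1) * Real.exp (-(a / 2) * x ^ 2)) :=
    integrable_rpow_mul_exp_neg_mul_sq (by linarith) (by have := Nat.cast_nonneg (α := ℝ) n; linarith)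
  have h2 : Integrable (fun x : ℝ => x ^ (n + 1) * Real.exp (-(a / 2) * x ^ 2)) := by
    convert h1 using 2 with x
    rw [← Real.rpow_natCast x (n + 1)]
    push_cast; ring_nf
  refine (h2.norm.const_mul (Real.exp (2 * b ^ 2 / a))).mono' ?_ ?_
  · apply Continuous.aestronglyMeasurable
    continuity
  · filter_upwards with l
    have hle : Real.exp (-a * l ^ 2 + 2 * b * l) ≤
        Real.exp (2 * b ^ 2 / a) * Real.exp (-(a / 2) * l ^ 2) := by
      rw [← Real.exp_add, Real.exp_le_exp, ← sub_nonneg]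
      have he : 2 * b ^ 2 / a + -(a / 2) * l ^ 2 - (-a * l ^ 2 + 2 * b * l)
          = (a * l - 2 * b) ^ 2 / (2 * a) := by
        field_simp; ring
      rw [he]; positivity
    have hnn : (0:ℝ) ≤ |l| * |l ^ n| := by positivity
    calc ‖|l| * l ^ n * Real.exp (-a * l ^ 2 + 2 * b * l)‖
        = |l| * |l ^ n| * Real.exp (-a * l ^ 2 + 2 * b * l) := by
          rw [norm_mul, norm_mul]
          simp [abs_of_nonneg (Real.exp_pos _).le, abs_abs]
      _ ≤ |l| * |l ^ n| * (Real.exp (2 * b ^ 2 / a) * Real.exp (-(a / 2) * l ^ 2)) :=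
          mul_le_mul_of_nonneg_left hle hnn
      _ = Real.exp (2 * b ^ 2 / a) * ‖l ^ (n + 1) * Real.exp (-(a / 2) * l ^ 2)‖ := by
          rw [norm_mul, norm_pow]
          simp [abs_of_nonneg (Real.exp_pos _).le]
          ring

lemma key_ibp (a b : ℝ) (ha : 0 < a) (n : ℕ) :
    ∫ l : ℝ, ((n + 2) * (|l| * l ^ n) + (2 * b) * (|l| * l ^ (n + 1))
        - (2 * a) * (|l| * l ^ (n + 2))) * Real.exp (-a * l ^ 2 + 2 * b * l) = 0 := by
  have hE : ∀ l : ℝ, HasDerivAt (fun y : ℝ => Real.exp (-a * y ^ 2 + 2 * b * y))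
      ((-2 * a * l + 2 * b) * Real.exp (-a * l ^ 2 + 2 * b * l)) l := fun l => by
    have h : HasDerivAt (fun y : ℝ => -a * y ^ 2 + 2 * b * y) (-2 * a * l + 2 * b) l := by
      have := ((hasDerivAt_pow 2 l).const_mul (-a)).add ((hasDerivAt_id l).const_mul (2 * b))
      refine this.congr_deriv ?_; push_cast; ring
    simpa [mul_comm] using h.exp
  have hF : ∀ l : ℝ, HasDerivAt (fun y : ℝ => |y| * y ^ (n + 1) * Real.exp (-a * y ^ 2 + 2 * b * y))
      (((n + 2) * (|l| * l ^ n) + (2 * b) * (|l| * l ^ (n + 1))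
        - (2 * a) * (|l| * l ^ (n + 2))) * Real.exp (-a * l ^ 2 + 2 * b * l)) l := fun l => by
    have := (hasDerivAt_abs_mul_pow n l).mul (hE l)
    refine this.congr_deriv ?_
    ring
  have hint : Integrable (fun l : ℝ => ((n + 2) * (|l| * l ^ n) + (2 * b) * (|l| * l ^ (n + 1))
      - (2 * a) * (|l| * l ^ (n + 2))) * Real.exp (-a * l ^ 2 + 2 * b * l)) := by
    have h0 := (integrable_aux a b ha n).const_mul ((n : ℝ) + 2)
    have h1 := (integrable_aux a b ha (n + 1)).const_mul (2 * b)
    have h2 := (integrable_aux a b ha (n + 2)).const_mul (2 * a)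
    have heq : (fun l : ℝ => ((n + 2 : ℝ) * (|l| * l ^ n) + (2 * b) * (|l| * l ^ (n + 1))
        - (2 * a) * (|l| * l ^ (n + 2))) * Real.exp (-a * l ^ 2 + 2 * b * l))
        = fun l : ℝ => ((n : ℝ) + 2) * (|l| * l ^ n * Real.exp (-a * l ^ 2 + 2 * b * l))
          + (2 * b) * (|l| * l ^ (n + 1) * Real.exp (-a * l ^ 2 + 2 * b * l))
          - (2 * a) * (|l| * l ^ (n + 2) * Real.exp (-a * l ^ 2 + 2 * b * l)) := by
      funext l; ring
    rw [heq]
    exact (h0.add h1).sub h2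
  exact integral_eq_zero_of_hasDerivAt_of_integrable hF hint (integrable_aux a b ha (n + 1))

lemma key_eq (a b : ℝ) (ha : 0 < a) (n p q : ℕ) (hp : p = n + 1) (hq : q = n + 2) :
    ((n : ℝ) + 2) * (∫ l : ℝ, |l| * l ^ n * Real.exp (-a * l ^ 2 + 2 * b * l))
      + (2 * b) * (∫ l : ℝ, |l| * l ^ p * Real.exp (-a * l ^ 2 + 2 * b * l))
      - (2 * a) * (∫ l : ℝ, |l| * l ^ q * Real.exp (-a * l ^ 2 + 2 * b * l)) = 0 := by
  subst hp hq
  have h0 := (integrable_aux a b ha n).const_mul ((n : ℝ) + 2)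
  have h1 := (integrable_aux a b ha (n + 1)).const_mul (2 * b)
  have h2 := (integrable_aux a b ha (n + 2)).const_mul (2 * a)
  have h01 : Integrable (fun l : ℝ => ((n : ℝ) + 2) * (|l| * l ^ n * Real.exp (-a * l ^ 2 + 2 * b * l))
      + (2 * b) * (|l| * l ^ (n + 1) * Real.exp (-a * l ^ 2 + 2 * b * l))) := h0.add h1
  have e : ∀ l : ℝ, ((n : ℝ) + 2) * (|l| * l ^ n * Real.exp (-a * l ^ 2 + 2 * b * l))
      + (2 * b) * (|l| * l ^ (n + 1) * Real.exp (-a * l ^ 2 + 2 * b * l))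
      - (2 * a) * (|l| * l ^ (n + 2) * Real.exp (-a * l ^ 2 + 2 * b * l))
      = ((n + 2 : ℝ) * (|l| * l ^ n) + (2 * b) * (|l| * l ^ (n + 1))
        - (2 * a) * (|l| * l ^ (n + 2))) * Real.exp (-a * l ^ 2 + 2 * b * l) := fun l => by ring
  have h' : ∫ l : ℝ, (((n : ℝ) + 2) * (|l| * l ^ n * Real.exp (-a * l ^ 2 + 2 * b * l))
      + (2 * b) * (|l| * l ^ (n + 1) * Real.exp (-a * l ^ 2 + 2 * b * l))
      - (2 * a) * (|l| * l ^ (n + 2) * Real.exp (-a * l ^ 2 + 2 * b * l))) = 0 := by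
    simp_rw [e]; exact key_ibp a b ha n
  rwa [integral_sub h01 h2, integral_add h0 h1, integral_const_mul, integral_const_mul,
    integral_const_mul] at h'

theorem stmt15 (a b : ℝ) (ha : 0 < a) :
    (∫ l : ℝ, |l| * l ^ 4 * Real.exp (-a * l ^ 2 + 2 * b * l))
      = (3 * b / (2 * a ^ 2)) * (∫ l : ℝ, |l| * l ^ 1 * Real.exp (-a * l ^ 2 + 2 * b * l)) +
        ((2 * a + b ^ 2) / a ^ 2) * (∫ l : ℝ, |l| * l ^ 2 * Real.exp (-a * l ^ 2 + 2 * b * l)) := by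
  have h1 := key_eq a b ha 1 2 3 rfl rfl
  have h2 := key_eq a b ha 2 3 4 rfl rfl
  push_cast at h1 h2
  set L1 := ∫ l : ℝ, |l| * l ^ 1 * Real.exp (-a * l ^ 2 + 2 * b * l) with hL1
  set L2 := ∫ l : ℝ, |l| * l ^ 2 * Real.exp (-a * l ^ 2 + 2 * b * l) with hL2
  set L3 := ∫ l : ℝ, |l| * l ^ 3 * Real.exp (-a * l ^ 2 + 2 * b * l) with hL3
  set L4 := ∫ l : ℝ, |l| * l ^ 4 * Real.exp (-a * l ^ 2 + 2 * b * l) with hL4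
  have ha' : a ≠ 0 := ha.ne'
  field_simp
  linear_combination (-a) * h2 - b * h1
end
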